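/- arXiv:2312.14993 — 2 statements merged into one kernel-verified Lean document; each statement's English description precedes it below -/
import Mathlib

section
/- For every real t ≥ 2 and every λ > 0, the quantity 2μ(Ω_1(t,λ)) equals: 1 if λ ≤ 1 − 2/t; (1/8)(4 + t² − 2λt² + λ²t² + 4t(1−λ)·log(2/(t(1−λ)))) if 1 − 2/t ≤ λ < 1; (1/8)(4 − t² + 2λt² − λ²t² − 4t(λ−1)·log(2/(t(λ−1)))) if 1 ≤ λ < 1 + 2/t; and 0 if λ ≥ 1 + 2/t. (Here a term of the form s·log(2/(ts)) is interpreted as 0 when s = 0.) -/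
open MeasureTheory

noncomputable section

/-- The limit domain `Ω_D(t,λ) ⊆ [-1/2,1/2]^{2D+1}`, with coordinates
`(x, y_{-D+1}, …, y_D)`: the coordinate of index `0` is `x` and the coordinate of index
`i ∈ {1, …, 2D}` is `y_j` with `j = i - D`.  It consists of the points with `x ≥ 0` such
that `y_j ∉ [y_0 + (j-λ)t/(4x), y_0 + j·t/(4x)]` for all `j ≠ 0`.
For `D = 1` this is the set `Ω_1(t,λ)` of points `(x, y_0, y_1) ∈ [-1/2,1/2]³` with
`x ≥ 0` and `y_1 ∉ [y_0 + (1-λ)t/(4x), y_0 + t/(4x)]`. -/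
def Omega (D : ℕ) (t lam : ℝ) : Set (Fin (2 * D + 1) → ℝ) :=
  {v | (∀ i, v i ∈ Set.Icc (-(1 : ℝ) / 2) (1 / 2)) ∧ 0 ≤ v ⟨0, by omega⟩ ∧
    ∀ i : Fin (2 * D + 1), (i : ℕ) ≠ 0 → (i : ℕ) ≠ D →
      v i ∉ Set.Icc
        (v ⟨D, by omega⟩ + (((i : ℕ) : ℝ) - (D : ℝ) - lam) * t / (4 * v ⟨0, by omega⟩))
        (v ⟨D, by omega⟩ + (((i : ℕ) : ℝ) - (D : ℝ)) * t / (4 * v ⟨0, by omega⟩))}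

namespace Stmt2Aux

open Set intervalIntegral

/-! ### One-dimensional auxiliary computations -/

lemma vol_Icc_inter_Iio (a b k : ℝ) :
    volume (Icc a b ∩ Iio k) = ENNReal.ofReal (min b k - a) := by
  rcases le_or_gt k a with h | h
  · have : Icc a b ∩ Iio k = ∅ := by
      ext z; simp only [mem_inter_iff, mem_Icc, mem_Iio, mem_empty_iff_false, iff_false]
      rintro ⟨⟨hz1, _⟩, hz3⟩; linarith
    rw [this]
    have : min b k - a ≤ 0 := by
      have := min_le_right b k; linarith
    simp [ENNReal.ofReal_eq_zero.2 this]
  · rcases le_or_gt k b with h2 | h2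
    · have : Icc a b ∩ Iio k = Ico a k := by
        ext z; simp only [mem_inter_iff, mem_Icc, mem_Iio, mem_Ico]
        constructor
        · rintro ⟨⟨h1, _⟩, h3⟩; exact ⟨h1, h3⟩
        · rintro ⟨h1, h3⟩; exact ⟨⟨h1, le_trans h3.le h2⟩, h3⟩
      rw [this, Real.volume_Ico, min_eq_right h2]
    · have : Icc a b ∩ Iio k = Icc a b := by
        rw [inter_eq_left]; intro z hz; exact lt_of_le_of_lt hz.2 h2
      rw [this, Real.volume_Icc, min_eq_left h2.le]

/-- The area of the slice `{(y₀,y₁) ∈ [-1/2,1/2]² : y₁ < y₀ + s}`. -/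
def Gf : ℝ → ℝ := fun s =>
  if s < -1 then 0 else if s < 0 then (1+s)^2/2 else if s < 1 then (1 - s^2)/2 + s else 1

lemma Gf_meas : Measurable Gf := by
  unfold Gf
  exact Measurable.ite measurableSet_Iio measurable_const <| Measurable.ite measurableSet_Iio
    (by fun_prop) <| Measurable.ite measurableSet_Iio (by fun_prop) measurable_const

lemma Gf_nonneg (s : ℝ) : 0 ≤ Gf s := by
  unfold Gf
  split_ifs with h1 h2 h3 <;> nlinarith

lemma Gf_le_one (s : ℝ) : Gf s ≤ 1 := by
  unfold Gf
  split_ifs with h1 h2 h3 <;> nlinarith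

lemma Gf_one {s : ℝ} (h : 1 ≤ s) : Gf s = 1 := by
  unfold Gf; split_ifs with h1 h2 h3 <;> first | rfl | linarith

lemma Gf_mid_pos {s : ℝ} (h0 : 0 ≤ s) (h1 : s < 1) : Gf s = (1 - s^2)/2 + s := by
  unfold Gf; split_ifs with h1' h2' h3' <;> first | rfl | linarith

lemma Gf_mid_neg {s : ℝ} (h0 : -1 ≤ s) (h1 : s < 0) : Gf s = (1+s)^2/2 := by
  unfold Gf; split_ifs with h1' h2' h3' <;> first | rfl | linarith

lemma Gf_zero' {s : ℝ} (h : s ≤ -1) : Gf s = 0 := by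
  unfold Gf; split_ifs with h1 h2 h3 <;> first | rfl | nlinarith

lemma cont_g (s : ℝ) : Continuous (fun y : ℝ => max 0 (min 1 (y + s + 1/2))) := by
  fun_prop

lemma int_lin (a b k : ℝ) : ∫ y in a..b, (y + k) = (b^2 - a^2)/2 + k * (b - a) := by
  rw [intervalIntegral.integral_add (intervalIntegrable_id) (intervalIntegrable_const),
    integral_id, intervalIntegral.integral_const, smul_eq_mul]
  ring

lemma intY (s : ℝ) :
    ∫ y in Icc (-(1:ℝ)/2) (1/2), max 0 (min 1 (y + s + 1/2)) = Gf s := by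
  have hle : (-(1:ℝ)/2) ≤ 1/2 := by norm_num
  rw [MeasureTheory.integral_Icc_eq_integral_Ioc, ← intervalIntegral.integral_of_le hle]
  unfold Gf
  split_ifs with h1 h2 h3
  · rw [intervalIntegral.integral_congr (g := fun _ => (0:ℝ)) ?_]
    · simp
    · intro y hy
      dsimp only
      rw [uIcc_of_le hle] at hy
      have hz : y + s + 1/2 ≤ 0 := by have := hy.2; linarith
      rw [min_eq_right (by linarith), max_eq_left hz]
  · push_neg at h1
    have hmem : (-s - 1/2) ∈ Icc (-(1:ℝ)/2) (1/2) := by constructor <;> linarith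
    rw [← intervalIntegral.integral_add_adjacent_intervals (b := -s - 1/2)
      ((cont_g s).intervalIntegrable _ _) ((cont_g s).intervalIntegrable _ _)]
    have e1 : ∫ y in (-(1:ℝ)/2)..(-s - 1/2), max 0 (min 1 (y + s + 1/2)) = 0 := by
      rw [intervalIntegral.integral_congr (g := fun _ => (0:ℝ))]
      · simp
      · intro y hy
        dsimp only
        rw [uIcc_of_le (by linarith [hmem.1])] at hy
        have hz : y + s + 1/2 ≤ 0 := by have := hy.2; linarith
        rw [min_eq_right (by linarith), max_eq_left hz]
    have e2 : ∫ y in (-s - 1/2)..(1/2:ℝ), max 0 (min 1 (y + s + 1/2)) = (1+s)^2/2 := by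
      rw [intervalIntegral.integral_congr (g := fun y => y + (s + 1/2))]
      · rw [int_lin]; ring
      · intro y hy
        dsimp only
        rw [uIcc_of_le (by linarith [hmem.2])] at hy
        have h0 : 0 ≤ y + s + 1/2 := by have := hy.1; linarith
        have hle1 : y + s + 1/2 ≤ 1 := by have := hy.2; linarith
        rw [min_eq_right hle1, max_eq_right h0]; ring
    rw [e1, e2]; ring
  · push_neg at h1 h2
    have hmem : (1/2 - s) ∈ Icc (-(1:ℝ)/2) (1/2) := by constructor <;> linarith
    rw [← intervalIntegral.integral_add_adjacent_intervals (b := 1/2 - s)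
      ((cont_g s).intervalIntegrable _ _) ((cont_g s).intervalIntegrable _ _)]
    have e1 : ∫ y in (-(1:ℝ)/2)..(1/2 - s), max 0 (min 1 (y + s + 1/2)) =
        ((1/2 - s)^2 - (-(1:ℝ)/2)^2)/2 + (s + 1/2) * ((1/2 - s) - (-(1:ℝ)/2)) := by
      rw [intervalIntegral.integral_congr (g := fun y => y + (s + 1/2))]
      · rw [int_lin]
      · intro y hy
        dsimp only
        rw [uIcc_of_le (by linarith [hmem.1])] at hy
        have h0 : 0 ≤ y + s + 1/2 := by have := hy.1; linarith
        have hle1 : y + s + 1/2 ≤ 1 := by have := hy.2; linarith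
        rw [min_eq_right hle1, max_eq_right h0]; ring
    have e2 : ∫ y in (1/2 - s)..(1/2:ℝ), max 0 (min 1 (y + s + 1/2)) = s := by
      rw [intervalIntegral.integral_congr (g := fun _ => (1:ℝ))]
      · simp
      · intro y hy
        dsimp only
        rw [uIcc_of_le (by linarith [hmem.2])] at hy
        have hz : 1 ≤ y + s + 1/2 := by have := hy.1; linarith
        rw [min_eq_left hz, max_eq_right (by norm_num : (0:ℝ) ≤ 1)]
    rw [e1, e2]; ring
  · push_neg at h3
    rw [intervalIntegral.integral_congr (g := fun _ => (1:ℝ))]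
    · simp; norm_num
    · intro y hy
      dsimp only
      rw [uIcc_of_le hle] at hy
      have hz : 1 ≤ y + s + 1/2 := by have := hy.1; linarith
      rw [min_eq_left hz, max_eq_right (by norm_num : (0:ℝ) ≤ 1)]

/-! ### The auxiliary sets in `ℝ × ℝ` and `ℝ × ℝ × ℝ` -/

def T2 (s : ℝ) : Set (ℝ × ℝ) :=
  {q | q.1 ∈ Icc (-(1:ℝ)/2) (1/2) ∧ q.2 ∈ Icc (-(1:ℝ)/2) (1/2) ∧ q.2 < q.1 + s}

lemma T2_meas (s : ℝ) : MeasurableSet (T2 s) := by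
  have : T2 s = (Prod.fst ⁻¹' Icc (-(1:ℝ)/2) (1/2)) ∩
      ((Prod.snd ⁻¹' Icc (-(1:ℝ)/2) (1/2)) ∩ {q : ℝ × ℝ | q.2 < q.1 + s}) := by
    ext q; simp [T2, and_assoc]
  rw [this]
  exact (measurable_fst measurableSet_Icc).inter ((measurable_snd measurableSet_Icc).inter
    (measurableSet_lt measurable_snd (measurable_fst.add_const s)))

lemma ofReal_max_zero (u : ℝ) : ENNReal.ofReal (max 0 u) = ENNReal.ofReal u := by
  rcases le_total u 0 with h | h
  · rw [max_eq_left h, ENNReal.ofReal_zero, eq_comm, ENNReal.ofReal_eq_zero.2 h]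
  · rw [max_eq_right h]

lemma vol2 (s : ℝ) : volume (T2 s) = ENNReal.ofReal (Gf s) := by
  rw [Measure.volume_eq_prod, Measure.prod_apply (T2_meas s)]
  have hslice : ∀ x : ℝ, volume (Prod.mk x ⁻¹' T2 s) =
      (Icc (-(1:ℝ)/2) (1/2)).indicator
        (fun x => ENNReal.ofReal (max 0 (min 1 (x + s + 1/2)))) x := by
    intro x
    by_cases hx : x ∈ Icc (-(1:ℝ)/2) (1/2)
    · rw [indicator_of_mem hx]
      have : Prod.mk x ⁻¹' T2 s = Icc (-(1:ℝ)/2) (1/2) ∩ Iio (x + s) := by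
        ext y; exact ⟨fun h => ⟨h.2.1, h.2.2⟩, fun h => ⟨hx, h.1, h.2⟩⟩
      rw [this, vol_Icc_inter_Iio, ofReal_max_zero]
      congr 1
      rcases le_total ((1:ℝ)/2) (x + s) with h | h
      · rw [min_eq_left h, min_eq_left (by linarith)]; norm_num
      · rw [min_eq_right h, min_eq_right (by linarith)]; ring
    · rw [indicator_of_notMem hx]
      have : Prod.mk x ⁻¹' T2 s = ∅ := eq_empty_of_forall_notMem fun y hy => hx hy.1
      simp [this]
  rw [lintegral_congr hslice, lintegral_indicator measurableSet_Icc _, ← intY s,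
    ofReal_integral_eq_lintegral_ofReal]
  · exact ((cont_g s).integrableOn_Icc)
  · exact Filter.Eventually.of_forall fun y => le_max_left _ _

def T3 (c : ℝ) : Set (ℝ × ℝ × ℝ) :=
  {p | p.1 ∈ Ioc (0:ℝ) (1/2) ∧ p.2 ∈ T2 (c / p.1)}

lemma T3_meas (c : ℝ) : MeasurableSet (T3 c) := by
  have : T3 c = (Prod.fst ⁻¹' Ioc (0:ℝ) (1/2)) ∩
      (((fun p : ℝ × ℝ × ℝ => p.2.1) ⁻¹' Icc (-(1:ℝ)/2) (1/2)) ∩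
      (((fun p : ℝ × ℝ × ℝ => p.2.2) ⁻¹' Icc (-(1:ℝ)/2) (1/2)) ∩
      {p : ℝ × ℝ × ℝ | p.2.2 < p.2.1 + c / p.1})) := by
    ext p; simp [T3, T2, and_assoc]
  rw [this]
  exact (measurable_fst measurableSet_Ioc).inter
    (((measurable_snd.fst) measurableSet_Icc).inter
    (((measurable_snd.snd) measurableSet_Icc).inter
    (measurableSet_lt measurable_snd.snd
      (measurable_snd.fst.add (measurable_const.div measurable_fst)))))

lemma integrableGc (c : ℝ) : IntegrableOn (fun x => Gf (c / x)) (Ioc (0:ℝ) (1/2)) := by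
  refine Integrable.mono' (g := fun _ => (1:ℝ)) ?_ ?_ ?_
  · refine integrable_const_iff.2 (Or.inr ?_)
    exact ⟨by rw [Measure.restrict_apply_univ, Real.volume_Ioc]; exact ENNReal.ofReal_lt_top⟩
  · exact (Gf_meas.comp (measurable_const.div measurable_id)).aestronglyMeasurable
  · exact Filter.Eventually.of_forall fun x => by
      rw [Real.norm_eq_abs, abs_of_nonneg (Gf_nonneg _)]; exact Gf_le_one _

lemma vol3 (c : ℝ) :
    volume (T3 c) = ENNReal.ofReal (∫ x in Ioc (0:ℝ) (1/2), Gf (c / x)) := by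
  rw [Measure.volume_eq_prod, Measure.prod_apply (T3_meas c)]
  have hslice : ∀ x : ℝ, volume (Prod.mk x ⁻¹' T3 c) =
      (Ioc (0:ℝ) (1/2)).indicator (fun x => ENNReal.ofReal (Gf (c / x))) x := by
    intro x
    by_cases hx : x ∈ Ioc (0:ℝ) (1/2)
    · rw [indicator_of_mem hx]
      have : Prod.mk x ⁻¹' T3 c = T2 (c / x) := by
        ext q; exact ⟨fun h => h.2, fun h => ⟨hx, h⟩⟩
      rw [this, vol2]
    · rw [indicator_of_notMem hx]
      have : Prod.mk x ⁻¹' T3 c = ∅ := eq_empty_of_forall_notMem fun q hq => hx hq.1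
      simp [this]
  rw [lintegral_congr hslice, lintegral_indicator measurableSet_Ioc _,
    ofReal_integral_eq_lintegral_ofReal (integrableGc c)
      (Filter.Eventually.of_forall fun x => Gf_nonneg _)]

/-! ### Relating `Omega 1` to `T3` -/

lemma omega_iff (t lam : ℝ) (v : Fin (2*1+1) → ℝ) :
    v ∈ Omega 1 t lam ↔ ((∀ i, v i ∈ Icc (-(1:ℝ)/2) (1/2)) ∧ 0 ≤ v 0 ∧
      v 2 ∉ Icc (v 1 + (1 - lam) * t / (4 * v 0)) (v 1 + t / (4 * v 0))) := by
  unfold Omega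
  simp only [mem_setOf_eq]
  constructor
  · rintro ⟨h1, h2, h3⟩
    refine ⟨h1, h2, ?_⟩
    have h := h3 2 (by norm_num) (by norm_num)
    convert h using 3 <;> norm_num
  · rintro ⟨h1, h2, h3⟩
    refine ⟨h1, h2, ?_⟩
    intro i hi0 hi1
    have : (i : ℕ) = 2 := by omega
    have hi : i = 2 := by
      apply Fin.ext; rw [this]; rfl
    subst hi
    convert h3 using 3 <;> norm_num

def F3 : (Fin (2*1+1) → ℝ) → ℝ × ℝ × ℝ := fun v => (v 0, v 1, v 2)

lemma F3_mp : MeasurePreserving F3 volume volume := by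
  have h1 := volume_preserving_piFinSuccAbove (fun _ : Fin 3 => ℝ) 0
  have h2 := (MeasurePreserving.id (volume : Measure ℝ)).prod (volume_preserving_finTwoArrow ℝ)
  exact h2.comp h1

lemma mem_F3_T3 (c : ℝ) (v : Fin (2*1+1) → ℝ) :
    v ∈ F3 ⁻¹' T3 c ↔ (v 0 ∈ Ioc (0:ℝ) (1/2) ∧ v 1 ∈ Icc (-(1:ℝ)/2) (1/2) ∧
      v 2 ∈ Icc (-(1:ℝ)/2) (1/2) ∧ v 2 < v 1 + c / v 0) := by
  simp [F3, T3, T2, and_assoc]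

lemma vol_omega (t lam : ℝ) (ht : 2 ≤ t) :
    volume (Omega 1 t lam) = volume (T3 ((1 - lam) * t / 4)) := by
  set c := (1 - lam) * t / 4 with hc
  have hdiv : ∀ x : ℝ, x ≠ 0 → (1 - lam) * t / (4 * x) = c / x := by
    intro x hx
    rw [hc, div_div]
  have hsub1 : F3 ⁻¹' T3 c ⊆ Omega 1 t lam := by
    intro v hv
    rw [mem_F3_T3] at hv
    obtain ⟨hx, hy0, hy1, hlt⟩ := hv
    rw [omega_iff]
    have hx0 : (0:ℝ) < v 0 := hx.1
    refine ⟨?_, le_of_lt hx0, ?_⟩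
    · intro i
      fin_cases i
      · show v 0 ∈ Icc (-(1:ℝ)/2) (1/2)
        exact ⟨by linarith [hx.1], hx.2⟩
      · show v 1 ∈ Icc (-(1:ℝ)/2) (1/2)
        exact hy0
      · show v 2 ∈ Icc (-(1:ℝ)/2) (1/2)
        exact hy1
    · intro hmem
      rw [hdiv _ (ne_of_gt hx0)] at hmem
      exact absurd hmem.1 (not_le.2 hlt)
  have hsub2 : Omega 1 t lam ⊆ F3 ⁻¹' T3 c ∪ {v | v 0 = 0} := by
    intro v hv
    rw [omega_iff] at hv
    obtain ⟨hbox, hx0, hnm⟩ := hv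
    rcases eq_or_lt_of_le hx0 with h0 | h0
    · exact Or.inr h0.symm
    · left
      rw [mem_F3_T3]
      have hxu : v 0 ≤ 1/2 := (hbox 0).2
      have hU : (1:ℝ)/2 ≤ v 1 + t / (4 * v 0) := by
        have ht2 : t / 2 ≤ t / (4 * v 0) := by
          apply div_le_div_of_nonneg_left (by linarith) (by linarith) (by linarith)
        have := (hbox 1).1
        linarith
      have hlt : v 2 < v 1 + c / v 0 := by
        by_contra hge
        push_neg at hge
        rw [← hdiv _ (ne_of_gt h0)] at hge
        exact hnm ⟨hge, le_trans (hbox 2).2 hU⟩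
      exact ⟨⟨h0, hxu⟩, hbox 1, hbox 2, hlt⟩
  have hnull : volume {v : Fin (2*1+1) → ℝ | v 0 = 0} = 0 := by
    rw [volume_pi]
    exact Measure.pi_hyperplane _ 0 0
  have hpre : volume (F3 ⁻¹' T3 c) = volume (T3 c) :=
    F3_mp.measure_preimage (T3_meas c).nullMeasurableSet
  refine le_antisymm ?_ ?_
  · calc volume (Omega 1 t lam) ≤ volume (F3 ⁻¹' T3 c ∪ {v | v 0 = 0}) := measure_mono hsub2
      _ ≤ volume (F3 ⁻¹' T3 c) + volume {v : Fin (2*1+1) → ℝ | v 0 = 0} := measure_union_le _ _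
      _ = volume (T3 c) := by rw [hnull, add_zero, hpre]
  · rw [← hpre]
    exact measure_mono hsub1

/-! ### The `x`-integrals -/

lemma ftc_aux (a b B C : ℝ) (ha : 0 < a) (hab : a ≤ b) :
    ∫ x in a..b, (1/2 + B/x + C/x^2) =
      (b/2 + B*Real.log b - C * b⁻¹) - (a/2 + B*Real.log a - C * a⁻¹) := by
  have h0 : ∀ x ∈ uIcc a b, x ≠ 0 := fun x hx => by
    rw [uIcc_of_le hab] at hx; exact ne_of_gt (lt_of_lt_of_le ha hx.1)
  have hderiv : ∀ x ∈ uIcc a b,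
      HasDerivAt (fun y : ℝ => y/2 + B*Real.log y - C * y⁻¹) (1/2 + B/x + C/x^2) x := by
    intro x hx
    have hxne := h0 x hx
    have H := (((hasDerivAt_id x).div_const 2).add
      ((Real.hasDerivAt_log hxne).const_mul B)).sub ((hasDerivAt_inv hxne).const_mul C)
    refine HasDerivAt.congr_deriv H ?_
    ring
  have hint : IntervalIntegrable (fun x : ℝ => 1/2 + B/x + C/x^2) volume a b := by
    apply ContinuousOn.intervalIntegrable
    exact ContinuousOn.add (ContinuousOn.add continuousOn_const
      (continuousOn_const.div continuousOn_id h0)) (continuousOn_const.div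
      (continuousOn_id.pow 2) (fun x hx => pow_ne_zero 2 (h0 x hx)))
  exact intervalIntegral.integral_eq_sub_of_hasDerivAt hderiv hint

lemma caseA {c : ℝ} (hc : 1/2 ≤ c) :
    ∫ x in Ioc (0:ℝ) (1/2), Gf (c/x) = 1/2 := by
  rw [setIntegral_congr_fun measurableSet_Ioc (g := fun _ => (1:ℝ))
    (fun x hx => Gf_one ((one_le_div hx.1).2 (le_trans hx.2 hc)))]
  rw [setIntegral_const, Real.volume_real_Ioc_of_le (by norm_num), smul_eq_mul, mul_one]
  norm_num

lemma caseB {c : ℝ} (hc0 : 0 < c) (hc : c < 1/2) :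
    ∫ x in Ioc (0:ℝ) (1/2), Gf (c/x) =
      1/4 + c^2 + c * (Real.log (1/2) - Real.log c) := by
  rw [← Ioc_union_Ioc_eq_Ioc (le_of_lt hc0) (le_of_lt hc),
    setIntegral_union (Ioc_disjoint_Ioc_of_le le_rfl) measurableSet_Ioc
      ((integrableGc c).mono_set (Ioc_subset_Ioc le_rfl (le_of_lt hc)))
      ((integrableGc c).mono_set (Ioc_subset_Ioc (le_of_lt hc0) le_rfl))]
  have e1 : ∫ x in Ioc (0:ℝ) c, Gf (c/x) = c := by
    rw [setIntegral_congr_fun measurableSet_Ioc (g := fun _ => (1:ℝ))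
      (fun x hx => Gf_one ((one_le_div hx.1).2 hx.2))]
    rw [setIntegral_const, Real.volume_real_Ioc_of_le (by linarith), smul_eq_mul, mul_one]
    ring
  have e2 : ∫ x in Ioc c (1/2:ℝ), Gf (c/x) =
      1/4 - c + c^2 + c * (Real.log (1/2) - Real.log c) := by
    rw [setIntegral_congr_fun measurableSet_Ioc
      (g := fun x => 1/2 + c/x + (-(c^2)/2)/x^2) ?_]
    · rw [← intervalIntegral.integral_of_le (le_of_lt hc),
        ftc_aux c (1/2) c (-(c^2)/2) hc0 (le_of_lt hc)]
      field_simp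
      ring
    · intro x hx
      dsimp only
      have hx0 : (0:ℝ) < x := lt_trans hc0 hx.1
      rw [Gf_mid_pos (le_of_lt (div_pos hc0 hx0)) ((div_lt_one hx0).2 hx.1)]
      field_simp
      ring
  rw [e1, e2]
  ring

lemma caseC : ∫ x in Ioc (0:ℝ) (1/2), Gf (0/x) = 1/4 := by
  have : ∀ x : ℝ, Gf (0/x) = 1/2 := by
    intro x
    rw [zero_div, Gf_mid_pos le_rfl (by norm_num)]
    norm_num
  simp_rw [this]
  rw [setIntegral_const, Real.volume_real_Ioc_of_le (by norm_num), smul_eq_mul]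
  norm_num

lemma caseD {c : ℝ} (hc0 : c < 0) (hc : -(1/2) < c) :
    ∫ x in Ioc (0:ℝ) (1/2), Gf (c/x) =
      1/4 - c^2 + c * (Real.log (1/2) - Real.log (-c)) := by
  have hcpos : 0 < -c := by linarith
  have hchalf : -c < 1/2 := by linarith
  rw [← Ioc_union_Ioc_eq_Ioc (le_of_lt hcpos) (le_of_lt hchalf),
    setIntegral_union (Ioc_disjoint_Ioc_of_le le_rfl) measurableSet_Ioc
      ((integrableGc c).mono_set (Ioc_subset_Ioc le_rfl (le_of_lt hchalf)))
      ((integrableGc c).mono_set (Ioc_subset_Ioc (le_of_lt hcpos) le_rfl))]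
  have e1 : ∫ x in Ioc (0:ℝ) (-c), Gf (c/x) = 0 := by
    rw [setIntegral_congr_fun measurableSet_Ioc (g := fun _ => (0:ℝ)) ?_]
    · simp
    · intro x hx
      apply Gf_zero'
      rw [div_le_iff₀ hx.1]
      linarith [hx.2]
  have e2 : ∫ x in Ioc (-c) (1/2:ℝ), Gf (c/x) =
      1/4 - c^2 + c * (Real.log (1/2) - Real.log (-c)) := by
    rw [setIntegral_congr_fun measurableSet_Ioc
      (g := fun x => 1/2 + c/x + (c^2/2)/x^2) ?_]
    · rw [← intervalIntegral.integral_of_le (le_of_lt hchalf),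
        ftc_aux (-c) (1/2) c (c^2/2) hcpos (le_of_lt hchalf), Real.log_neg_eq_log]
      have hcne : c ≠ 0 := ne_of_lt hc0
      field_simp [hcne]
      ring
    · intro x hx
      dsimp only
      have hx0 : (0:ℝ) < x := lt_trans hcpos hx.1
      have h1 : -1 ≤ c/x := by
        rw [le_div_iff₀ hx0]
        nlinarith [hx.1]
      rw [Gf_mid_neg h1 (div_neg_of_neg_of_pos hc0 hx0)]
      field_simp
      ring
  rw [e1, e2]
  ring

lemma caseE {c : ℝ} (hc : c ≤ -(1/2)) :
    ∫ x in Ioc (0:ℝ) (1/2), Gf (c/x) = 0 := by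
  rw [setIntegral_congr_fun measurableSet_Ioc (g := fun _ => (0:ℝ)) ?_]
  · simp
  · intro x hx
    apply Gf_zero'
    rw [div_le_iff₀ hx.1]
    linarith [hx.2]

end Stmt2Aux

open Stmt2Aux Set in
/-- the explicit value of `2μ(Ω_1(t,λ))` for `t ≥ 2` and `λ > 0`.
(Note that a term `s·log(2/(t·s))` is interpreted as `0` when `s = 0`; this is
automatic in Lean since `2/0 = 0` and `log 0 = 0`.) -/
theorem stmt2 (t : ℝ) (ht : 2 ≤ t) (lam : ℝ) (hlam : 0 < lam) :
    2 * (volume (Omega 1 t lam)).toReal =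
      if lam ≤ 1 - 2 / t then 1
      else if lam < 1 then
        (1 / 8) * (4 + t ^ 2 - 2 * lam * t ^ 2 + lam ^ 2 * t ^ 2 +
          4 * t * (1 - lam) * Real.log (2 / (t * (1 - lam))))
      else if lam < 1 + 2 / t then
        (1 / 8) * (4 - t ^ 2 + 2 * lam * t ^ 2 - lam ^ 2 * t ^ 2 -
          4 * t * (lam - 1) * Real.log (2 / (t * (lam - 1))))
      else 0 := by
  have ht0 : (0:ℝ) < t := lt_of_lt_of_le two_pos ht
  rw [vol_omega t lam ht, vol3,
    ENNReal.toReal_ofReal (setIntegral_nonneg measurableSet_Ioc fun x _ => Gf_nonneg _)]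
  by_cases h1 : lam ≤ 1 - 2/t
  · rw [if_pos h1]
    have hc : 1/2 ≤ (1-lam)*t/4 := by
      have h2t : 2/t ≤ 1 - lam := by linarith
      rw [div_le_iff₀ ht0] at h2t
      nlinarith
    rw [caseA hc]
    norm_num
  · push_neg at h1
    rw [if_neg (not_le.2 h1)]
    by_cases h2 : lam < 1
    · rw [if_pos h2]
      have h1lam : (0:ℝ) < 1 - lam := by linarith
      have hc0 : 0 < (1-lam)*t/4 := by positivity
      have hcu : (1-lam)*t/4 < 1/2 := by
        have h2t : 1 - lam < 2/t := by linarith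
        rw [lt_div_iff₀ ht0] at h2t
        linarith
      rw [caseB hc0 hcu]
      have harg : (2:ℝ)/(t*(1-lam)) = (1/2) / ((1-lam)*t/4) := by
        field_simp
        ring
      rw [harg, Real.log_div (by norm_num) (ne_of_gt hc0)]
      ring
    · push_neg at h2
      rw [if_neg (not_lt.2 h2)]
      by_cases h3 : lam < 1 + 2/t
      · rw [if_pos h3]
        rcases eq_or_lt_of_le h2 with he | hlt
        · have hcz : (1 - lam)*t/4 = 0 := by rw [← he]; ring
          rw [hcz, caseC, ← he]
          norm_num
          ring
        · have h1lam : (0:ℝ) < lam - 1 := by linarith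
          have hc0 : (1-lam)*t/4 < 0 := by
            apply div_neg_of_neg_of_pos _ (by norm_num)
            exact mul_neg_of_neg_of_pos (by linarith) ht0
          have hcl : -(1/2) < (1-lam)*t/4 := by
            have h2t : lam - 1 < 2/t := by linarith
            rw [lt_div_iff₀ ht0] at h2t
            nlinarith
          rw [caseD hc0 hcl]
          have harg : (2:ℝ)/(t*(lam-1)) = (1/2) / (-((1-lam)*t/4)) := by
            rw [div_eq_div_iff (ne_of_gt (mul_pos ht0 h1lam))
              (ne_of_gt (by linarith : (0:ℝ) < -((1-lam)*t/4)))]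
            ring
          rw [harg, Real.log_div (by norm_num)
            (ne_of_gt (by linarith : (0:ℝ) < -((1-lam)*t/4)))]
          ring
      · rw [if_neg h3]
        push_neg at h3
        have hc : (1-lam)*t/4 ≤ -(1/2) := by
          have h2t : 2/t ≤ lam - 1 := by linarith
          rw [div_le_iff₀ ht0] at h2t
          nlinarith
        rw [caseE hc]
        norm_num

end
end

section
/- Let D ≥ 1 be an integer and t > 2/D a real number. Then there exists J_0 > 0 such that for every real J ≥ J_0, every integer m with 0 ≤ m ≤ J, and all x_1, x_2 ∈ [−J, J], one has m/(x_1 + tJ²) < (m + D)/(x_2 + tJ²); that is, an observer at (−tJ², 0) looking into the square [−J,J]² sees every point of the horizontal row at height m before any point of the row at height m + D. -/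
/-- For an integer `D ≥ 1` and a real `t > 2/D`, there exists `J₀ > 0`
such that for all `J ≥ J₀`, every integer `m` with `0 ≤ m ≤ J`, and all
`x₁, x₂ ∈ [-J, J]`, the slope of the ray towards any point of the row at height `m`
is strictly smaller than the slope towards any point of the row at height `m + D`:
`m/(x₁ + tJ²) < (m + D)/(x₂ + tJ²)`. -/
theorem stmt16 (D : ℕ) (hD : 1 ≤ D) (t : ℝ) (ht : 2 / (D : ℝ) < t) :
    ∃ J0 : ℝ, 0 < J0 ∧ ∀ J : ℝ, J0 ≤ J → ∀ m : ℕ, (m : ℝ) ≤ J →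
      ∀ x1 x2 : ℝ, x1 ∈ Set.Icc (-J) J → x2 ∈ Set.Icc (-J) J →
        (m : ℝ) / (x1 + t * J ^ 2) < ((m : ℝ) + (D : ℝ)) / (x2 + t * J ^ 2) := by
  have hD' : (1 : ℝ) ≤ (D : ℝ) := by exact_mod_cast hD
  have hDpos : (0 : ℝ) < (D : ℝ) := by linarith
  have htpos : 0 < t := lt_trans (by positivity) ht
  have hc : 0 < t * (D : ℝ) - 2 := by
    have := (div_lt_iff₀ hDpos).mp ht
    linarith
  refine ⟨(D : ℝ) / (t * (D : ℝ) - 2) + 1 / t + 1, by positivity, ?_⟩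
  intro J hJ m hm x1 x2 hx1 hx2
  obtain ⟨hx1l, hx1u⟩ := hx1
  obtain ⟨hx2l, hx2u⟩ := hx2
  have hmnn : (0 : ℝ) ≤ (m : ℝ) := Nat.cast_nonneg m
  have hfrac1 : 0 ≤ (D : ℝ) / (t * (D : ℝ) - 2) := by positivity
  have hfrac2 : 0 < 1 / t := by positivity
  have hJ1 : 1 / t + 1 ≤ J := by linarith
  have hJt : 1 < t * J := by
    have : 1 / t < J := by linarith
    calc 1 = t * (1 / t) := by field_simp
    _ < t * J := by exact mul_lt_mul_of_pos_left this htpos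
  have hJpos : 0 < J := by nlinarith
  have hJbig : (D : ℝ) < (t * (D : ℝ) - 2) * J := by
    have h1 : (D : ℝ) / (t * (D : ℝ) - 2) < J := by linarith
    have := (div_lt_iff₀ hc).mp h1
    linarith [this]
  have hden1 : 0 < x1 + t * J ^ 2 := by nlinarith
  have hden2 : 0 < x2 + t * J ^ 2 := by nlinarith
  rw [div_lt_div_iff₀ hden1 hden2]
  nlinarith [mul_nonneg hmnn (sub_nonneg.mpr hx2u), mul_nonneg hmnn (by linarith : (0:ℝ) ≤ x1 + J),
    mul_nonneg hDpos.le (by linarith : (0:ℝ) ≤ x1 + J),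
    mul_pos hJpos (by linarith : (0:ℝ) < (t * (D : ℝ) - 2) * J - (D : ℝ)),
    mul_nonneg (sub_nonneg.mpr hm) hJpos.le]
end
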